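/- Let H and A be N×N complex matrices with H Hermitian, and define f : ℝ → Matrix(N,N,ℂ) by f(θ) = exp(iθH) · A · exp(−iθH). Then: (i) for every integer p ≥ 1 and every φ ∈ ℝ, the p-th derivative satisfies f^(p)(φ) = i^p · exp(iφH) · ad_H^p(A) · exp(−iφH); and (ii) for every integer p ≥ 2 and every φ ∈ ℝ, ‖f^(p)(φ)‖ ≤ (2·ω_max(H))^(p−2) · ‖[H,[H,A]]‖. -/

import Mathlib

open scoped Matrix.Norms.L2Operator

/-- The `p`-fold nested commutator `ad_H^p(A) = [H, [H, …, [H, A]…]]`. -/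
noncomputable def adPow {N : ℕ} (H : Matrix (Fin N) (Fin N) ℂ) :
    ℕ → Matrix (Fin N) (Fin N) ℂ → Matrix (Fin N) (Fin N) ℂ
  | 0, A => A
  | p + 1, A => H * adPow H p A - adPow H p A * H

/-- The maximal frequency of a Hermitian matrix: the difference between its largest and
smallest eigenvalues. -/
noncomputable def omegaMax {N : ℕ} {H : Matrix (Fin N) (Fin N) ℂ} (hH : H.IsHermitian) : ℝ :=
  (⨆ i, hH.eigenvalues i) - ⨅ i, hH.eigenvalues i

namespace Stmt7Aux

open NormedSpace

lemma diag_norm_le {N : ℕ} [NeZero N] (v : Fin N → ℂ) (c : ℝ) (hc : 0 ≤ c)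
    (h : ∀ i, ‖v i‖ ≤ c) : ‖Matrix.diagonal v‖ ≤ c := by
  rw [Matrix.l2_opNorm_def]
  apply ContinuousLinearMap.opNorm_le_bound _ hc
  intro x
  have hx : ∀ i : Fin N,
      ((LinearEquiv.trans Matrix.toEuclideanLin LinearMap.toContinuousLinearMap)
        (Matrix.diagonal v) x) i = v i * x i := by
    intro i
    simp [Matrix.toEuclideanLin, Matrix.mulVec_diagonal]
  rw [EuclideanSpace.norm_eq, EuclideanSpace.norm_eq]
  calc Real.sqrt (∑ i, ‖((LinearEquiv.trans Matrix.toEuclideanLin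
          LinearMap.toContinuousLinearMap) (Matrix.diagonal v) x) i‖ ^ 2)
      = Real.sqrt (∑ i, ‖v i * x i‖ ^ 2) := by
        rw [funext fun i => congrArg (· ^ 2) (congrArg norm (hx _))]
    _ ≤ Real.sqrt (∑ i, c ^ 2 * ‖x i‖ ^ 2) := by
        apply Real.sqrt_le_sqrt
        apply Finset.sum_le_sum
        intro i _
        rw [norm_mul, mul_pow]
        gcongr
        exact h i
    _ = c * Real.sqrt (∑ i, ‖x i‖ ^ 2) := by
        rw [← Finset.mul_sum, Real.sqrt_mul (sq_nonneg c), Real.sqrt_sq hc]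

lemma omegaMax_nonneg {N : ℕ} [NeZero N] {H : Matrix (Fin N) (Fin N) ℂ}
    (hH : H.IsHermitian) : 0 ≤ omegaMax hH := by
  have i0 : Fin N := ⟨0, Nat.pos_of_ne_zero (NeZero.ne N)⟩
  have h1 := ciInf_le (Finite.bddBelow_range hH.eigenvalues) i0
  have h2 := le_ciSup (Finite.bddAbove_range hH.eigenvalues) i0
  unfold omegaMax; linarith

lemma shift_norm_le {N : ℕ} [NeZero N] {H : Matrix (Fin N) (Fin N) ℂ}
    (hH : H.IsHermitian) :
    ‖H - ((⨅ i, hH.eigenvalues i : ℝ) : ℂ) • 1‖ ≤ omegaMax hH := by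
  set c : ℝ := ⨅ i, hH.eigenvalues i
  set U : Matrix (Fin N) (Fin N) ℂ := (hH.eigenvectorUnitary : Matrix (Fin N) (Fin N) ℂ)
  have hU : U ∈ unitary (Matrix (Fin N) (Fin N) ℂ) := hH.eigenvectorUnitary.2
  have hspec := hH.spectral_theorem
  have key : H - (c : ℂ) • 1 =
      U * Matrix.diagonal (fun i => ((hH.eigenvalues i - c : ℝ) : ℂ)) * star U := by
    have h1 : (c : ℂ) • (1 : Matrix (Fin N) (Fin N) ℂ) = U * ((c : ℂ) • 1) * star U := by
      rw [Matrix.mul_smul, mul_one, Matrix.smul_mul]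
      congr 1
      exact (Unitary.mul_star_self_of_mem hU).symm
    rw [h1]
    nth_rewrite 1 [hspec]
    rw [Unitary.conjStarAlgAut_apply]
    rw [← Matrix.sub_mul, ← Matrix.mul_sub]
    congr 2
    rw [← Matrix.diagonal_one, ← Matrix.diagonal_smul, Matrix.diagonal_sub]
    ext i
    simp [Function.comp]
  rw [key, CStarRing.norm_mul_mem_unitary _ (Unitary.star_mem hU),
    CStarRing.norm_mem_unitary_mul _ hU]
  apply diag_norm_le _ _ (omegaMax_nonneg hH)
  intro i
  have h1 : c ≤ hH.eigenvalues i := ciInf_le (Finite.bddBelow_range _) i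
  have h2 : hH.eigenvalues i ≤ ⨆ j, hH.eigenvalues j :=
    le_ciSup (Finite.bddAbove_range hH.eigenvalues) i
  rw [Complex.norm_real, Real.norm_eq_abs, abs_of_nonneg (by linarith)]
  unfold omegaMax; linarith

lemma comm_bound {N : ℕ} [NeZero N] {H : Matrix (Fin N) (Fin N) ℂ}
    (hH : H.IsHermitian) (X : Matrix (Fin N) (Fin N) ℂ) :
    ‖H * X - X * H‖ ≤ (2 * omegaMax hH) * ‖X‖ := by
  set c : ℝ := ⨅ i, hH.eigenvalues i
  set H' : Matrix (Fin N) (Fin N) ℂ := H - (c : ℂ) • 1 with hH'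
  have key : H * X - X * H = H' * X - X * H' := by
    rw [hH']
    simp only [Matrix.sub_mul, Matrix.mul_sub, smul_mul_assoc, mul_smul_comm,
      one_mul, mul_one]
    abel
  have hn : ‖H'‖ ≤ omegaMax hH := shift_norm_le hH
  have h1 : ‖H' * X‖ ≤ ‖H'‖ * ‖X‖ := norm_mul_le _ _
  have h2 : ‖X * H'‖ ≤ ‖X‖ * ‖H'‖ := norm_mul_le _ _
  have h3 : ‖H' * X - X * H'‖ ≤ ‖H' * X‖ + ‖X * H'‖ := norm_sub_le _ _
  have hX : (0:ℝ) ≤ ‖X‖ := norm_nonneg _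
  have hH'0 : (0:ℝ) ≤ ‖H'‖ := norm_nonneg _
  rw [key]
  nlinarith

lemma exp_unitary {N : ℕ} [NeZero N] {H : Matrix (Fin N) (Fin N) ℂ}
    (hH : H.IsHermitian) (z : ℂ) (hz : starRingEnd ℂ z = -z) :
    exp (z • H) ∈ unitary (Matrix (Fin N) (Fin N) ℂ) := by
  let +nondep : NormedAlgebra ℚ (Matrix (Fin N) (Fin N) ℂ) := .restrictScalars ℚ ℂ _
  apply exp_mem_unitary_of_mem_skewAdjoint
  rw [skewAdjoint.mem_iff, star_smul, Matrix.star_eq_conjTranspose, hH.eq,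
    show star z = -z from hz, neg_smul]

lemma key_deriv {N : ℕ} [NeZero N] (H C : Matrix (Fin N) (Fin N) ℂ) (θ : ℝ) :
    HasDerivAt (fun u : ℝ => exp ((Complex.I * (u : ℂ)) • H) * C *
        exp ((-(Complex.I * (u : ℂ))) • H))
      (Complex.I • (exp ((Complex.I * (θ : ℂ)) • H) * (H * C - C * H) *
        exp ((-(Complex.I * (θ : ℂ))) • H))) θ := by
  have harg : ∀ u : ℝ, (Complex.I * (u : ℂ)) • H = u • (Complex.I • H) := by
    intro u
    rw [mul_smul, smul_comm]
    norm_cast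
  have harg' : ∀ u : ℝ, (-(Complex.I * (u : ℂ))) • H = u • (-(Complex.I • H)) := by
    intro u
    rw [smul_neg, ← harg u, ← neg_smul]
  have h1 : HasDerivAt (fun u : ℝ => exp (u • (Complex.I • H)))
      (exp (θ • (Complex.I • H)) * (Complex.I • H)) θ := by
    have := hasDerivAt_exp_smul_const (𝕂 := ℝ) (Complex.I • H) θ
    exact this
  have h2 : HasDerivAt (fun u : ℝ => exp (u • (-(Complex.I • H))))
      (exp (θ • (-(Complex.I • H))) * (-(Complex.I • H))) θ := by
    have := hasDerivAt_exp_smul_const (𝕂 := ℝ) (-(Complex.I • H)) θ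
    exact this
  have h3 := (h1.mul_const C).mul h2
  simp only [harg, harg']
  refine h3.congr_deriv ?_
  have hcomm : exp (θ • (-(Complex.I • H))) * (-(Complex.I • H))
      = (-(Complex.I • H)) * exp (θ • (-(Complex.I • H))) :=
    (((Commute.refl (-(Complex.I • H))).smul_right (θ : ℝ)).exp_right).symm.eq
  rw [hcomm]
  simp only [Matrix.mul_smul, Matrix.smul_mul, mul_neg, neg_smul, smul_sub,
    Matrix.sub_mul, Matrix.mul_sub, smul_neg, mul_assoc, smul_mul_assoc, mul_smul_comm]
  abel_nf
  simp only [smul_mul_assoc, mul_smul_comm, smul_smul]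

end Stmt7Aux

open Stmt7Aux NormedSpace in
/-- For `f(θ) = exp(iθH)·A·exp(−iθH)` with `H` Hermitian:
(i) `f⁽ᵖ⁾(φ) = iᵖ·exp(iφH)·ad_H^p(A)·exp(−iφH)` for `p ≥ 1`; and
(ii) `‖f⁽ᵖ⁾(φ)‖ ≤ (2·ω_max(H))^(p−2)·‖[H,[H,A]]‖` for `p ≥ 2`. -/
theorem stmt7 {N : ℕ} [NeZero N] (H A : Matrix (Fin N) (Fin N) ℂ) (hH : H.IsHermitian)
    (f : ℝ → Matrix (Fin N) (Fin N) ℂ)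
    (hf : ∀ θ : ℝ, f θ = NormedSpace.exp ((Complex.I * (θ : ℂ)) • H) * A *
        NormedSpace.exp ((-(Complex.I * (θ : ℂ))) • H)) :
    (∀ p : ℕ, 1 ≤ p → ∀ φ : ℝ,
      iteratedDeriv p f φ = (Complex.I ^ p) •
        (NormedSpace.exp ((Complex.I * (φ : ℂ)) • H) * adPow H p A *
          NormedSpace.exp ((-(Complex.I * (φ : ℂ))) • H))) ∧
    (∀ p : ℕ, 2 ≤ p → ∀ φ : ℝ,
      ‖iteratedDeriv p f φ‖ ≤
        (2 * omegaMax hH) ^ (p - 2) * ‖H * (H * A - A * H) - (H * A - A * H) * H‖) := by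
  -- part (i), for all p
  have main : ∀ p : ℕ, ∀ φ : ℝ,
      iteratedDeriv p f φ = (Complex.I ^ p) •
        (exp ((Complex.I * (φ : ℂ)) • H) * adPow H p A *
          exp ((-(Complex.I * (φ : ℂ))) • H)) := by
    intro p
    induction p with
    | zero =>
      intro φ
      rw [iteratedDeriv_zero, hf φ]
      simp [adPow]
    | succ p ih =>
      intro φ
      rw [iteratedDeriv_succ]
      have heq : iteratedDeriv p f = fun θ : ℝ => (Complex.I ^ p) •
          (exp ((Complex.I * (θ : ℂ)) • H) * adPow H p A *
            exp ((-(Complex.I * (θ : ℂ))) • H)) := funext ih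
      rw [heq]
      have hd := (key_deriv H (adPow H p A) φ).const_smul (Complex.I ^ p)
      have : adPow H (p + 1) A = H * adPow H p A - adPow H p A * H := rfl
      rw [this]
      have hd' : HasDerivAt (fun θ : ℝ => (Complex.I ^ p) •
          (exp ((Complex.I * (θ : ℂ)) • H) * adPow H p A *
            exp ((-(Complex.I * (θ : ℂ))) • H))) _ φ := hd
      rw [hd'.deriv]
      rw [smul_smul, ← pow_succ]
  constructor
  · intro p _ φ
    exact main p φ
  · intro p hp φ
    -- unitary facts
    have hconjI : starRingEnd ℂ (Complex.I * (φ : ℂ)) = -(Complex.I * (φ : ℂ)) := by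
      simp [Complex.ext_iff]
    have hU1 : exp ((Complex.I * (φ : ℂ)) • H) ∈ unitary (Matrix (Fin N) (Fin N) ℂ) :=
      exp_unitary hH _ hconjI
    have hU2 : exp ((-(Complex.I * (φ : ℂ))) • H) ∈ unitary (Matrix (Fin N) (Fin N) ℂ) := by
      apply exp_unitary hH
      rw [map_neg, hconjI, neg_neg]
    have hnorm : ‖iteratedDeriv p f φ‖ = ‖adPow H p A‖ := by
      rw [main p φ, norm_smul, norm_pow, Complex.norm_I, one_pow, one_mul,
        CStarRing.norm_mul_mem_unitary _ hU2, CStarRing.norm_mem_unitary_mul _ hU1]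
    -- adPow bound
    have hbound : ∀ q : ℕ, ‖adPow H (q + 2) A‖ ≤ (2 * omegaMax hH) ^ q * ‖adPow H 2 A‖ := by
      intro q
      induction q with
      | zero => simp
      | succ q ih =>
        have h1 : adPow H (q + 3) A = H * adPow H (q + 2) A - adPow H (q + 2) A * H := rfl
        calc ‖adPow H (q + 1 + 2) A‖ = ‖H * adPow H (q + 2) A - adPow H (q + 2) A * H‖ := by
              rw [show q + 1 + 2 = q + 3 from rfl, h1]
          _ ≤ (2 * omegaMax hH) * ‖adPow H (q + 2) A‖ := comm_bound hH _
          _ ≤ (2 * omegaMax hH) * ((2 * omegaMax hH) ^ q * ‖adPow H 2 A‖) := by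
              apply mul_le_mul_of_nonneg_left ih
              have := omegaMax_nonneg hH
              linarith
          _ = (2 * omegaMax hH) ^ (q + 1) * ‖adPow H 2 A‖ := by ring
    obtain ⟨q, rfl⟩ : ∃ q, p = q + 2 := ⟨p - 2, by omega⟩
    have h2 : adPow H 2 A = H * (H * A - A * H) - (H * A - A * H) * H := by
      simp [adPow]
    rw [hnorm, show q + 2 - 2 = q from rfl, ← h2]
    exact hbound q
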